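/- Let p_f : ℝ → EuclideanSpace ℝ (Fin 3) be twice differentiable in a neighborhood of s₀ with ‖p_f'(s)‖ = 1 for all s, suppose k(s) := ‖p_f''(s)‖ ≠ 0 for all s in a neighborhood of s₀, and suppose the normal n(s) := p_f''(s)/k(s) is differentiable at s₀. Then n'(s₀) = −k(s₀) t(s₀) + τ(s₀) b(s₀), where t(s₀) := p_f'(s₀), b(s₀) := t(s₀) × n(s₀), and τ(s₀) := ⟪b(s₀), n'(s₀)⟫. -/

import Mathlib

open scoped RealInnerProductSpace Matrix

/-- Cross product on `EuclideanSpace ℝ (Fin 3)`. -/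
noncomputable def cross3 (u v : EuclideanSpace ℝ (Fin 3)) : EuclideanSpace ℝ (Fin 3) :=
  (WithLp.equiv 2 (Fin 3 → ℝ)).symm
    ![u 1 * v 2 - u 2 * v 1, u 2 * v 0 - u 0 * v 2, u 0 * v 1 - u 1 * v 0]

/-- Tangent vector of an arc-length parameterized curve. -/
noncomputable def tang (p_f : ℝ → EuclideanSpace ℝ (Fin 3)) (s : ℝ) : EuclideanSpace ℝ (Fin 3) :=
  deriv p_f s

/-- Curvature. -/
noncomputable def curv (p_f : ℝ → EuclideanSpace ℝ (Fin 3)) (s : ℝ) : ℝ :=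
  ‖deriv (deriv p_f) s‖

/-- Normal vector. -/
noncomputable def nor (p_f : ℝ → EuclideanSpace ℝ (Fin 3)) (s : ℝ) : EuclideanSpace ℝ (Fin 3) :=
  (curv p_f s)⁻¹ • deriv (deriv p_f) s

/-- Binormal vector. -/
noncomputable def binor (p_f : ℝ → EuclideanSpace ℝ (Fin 3)) (s : ℝ) : EuclideanSpace ℝ (Fin 3) :=
  cross3 (tang p_f s) (nor p_f s)

/-- Torsion: `τ(s) = ⟪b(s), n'(s)⟫`. -/
noncomputable def tors (p_f : ℝ → EuclideanSpace ℝ (Fin 3)) (s : ℝ) : ℝ :=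
  ⟪binor p_f s, deriv (nor p_f) s⟫

lemma inner3 (u v : EuclideanSpace ℝ (Fin 3)) : ⟪u, v⟫ = u 0 * v 0 + u 1 * v 1 + u 2 * v 2 := by
  simp [PiLp.inner_apply, RCLike.inner_apply, Fin.sum_univ_three]
  ring

lemma decomp_comp (t0 t1 t2 n0 n1 n2 v0 v1 v2 : ℝ)
    (h1 : t0*t0+t1*t1+t2*t2 = 1) (h2 : n0*n0+n1*n1+n2*n2 = 1) (h3 : t0*n0+t1*n1+t2*n2 = 0) :
    v0 = (t0*v0+t1*v1+t2*v2)*t0 + (n0*v0+n1*v1+n2*v2)*n0 +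
      ((t1*n2-t2*n1)*v0+(t2*n0-t0*n2)*v1+(t0*n1-t1*n0)*v2)*(t1*n2-t2*n1) := by
  linear_combination ((n0*v0+n1*v1+n2*v2)*n0 - (n0*n0+n1*n1+n2*n2)*v0) * h1 +
    ((t0*v0+t1*v1+t2*v2)*t0 - v0) * h2 +
    ((t0*n0+t1*n1+t2*n2)*v0 - (t0*v0+t1*v1+t2*v2)*n0 - (n0*v0+n1*v1+n2*v2)*t0) * h3

lemma decomp (T N v : EuclideanSpace ℝ (Fin 3)) (h1 : ⟪T, T⟫ = 1) (h2 : ⟪N, N⟫ = 1)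
    (h3 : ⟪T, N⟫ = 0) :
    v = ⟪T, v⟫ • T + ⟪N, v⟫ • N + ⟪cross3 T N, v⟫ • cross3 T N := by
  simp only [inner3] at h1 h2 h3
  have hc0 : cross3 T N 0 = T 1 * N 2 - T 2 * N 1 := rfl
  have hc1 : cross3 T N 1 = T 2 * N 0 - T 0 * N 2 := rfl
  have hc2 : cross3 T N 2 = T 0 * N 1 - T 1 * N 0 := rfl
  have e0 : v 0 = (⟪T, v⟫ • T + ⟪N, v⟫ • N + ⟪cross3 T N, v⟫ • cross3 T N) 0 := by
    simp only [PiLp.add_apply, PiLp.smul_apply, smul_eq_mul, inner3, hc0, hc1, hc2]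
    exact decomp_comp _ _ _ _ _ _ _ _ _ h1 h2 h3
  have e1 : v 1 = (⟪T, v⟫ • T + ⟪N, v⟫ • N + ⟪cross3 T N, v⟫ • cross3 T N) 1 := by
    simp only [PiLp.add_apply, PiLp.smul_apply, smul_eq_mul, inner3, hc0, hc1, hc2]
    have := decomp_comp (T 1) (T 2) (T 0) (N 1) (N 2) (N 0) (v 1) (v 2) (v 0)
      (by linarith) (by linarith) (by linarith)
    linarith [this]
  have e2 : v 2 = (⟪T, v⟫ • T + ⟪N, v⟫ • N + ⟪cross3 T N, v⟫ • cross3 T N) 2 := by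
    simp only [PiLp.add_apply, PiLp.smul_apply, smul_eq_mul, inner3, hc0, hc1, hc2]
    have := decomp_comp (T 2) (T 0) (T 1) (N 2) (N 0) (N 1) (v 2) (v 0) (v 1)
      (by linarith) (by linarith) (by linarith)
    linarith [this]
  refine PiLp.ext fun i => ?_
  fin_cases i
  · exact e0
  · exact e1
  · exact e2

theorem serret_frenet_normal_derivative
    (p_f : ℝ → EuclideanSpace ℝ (Fin 3)) (s₀ : ℝ)
    (hd1 : ∀ᶠ s in nhds s₀, DifferentiableAt ℝ p_f s)
    (hd2 : ∀ᶠ s in nhds s₀, DifferentiableAt ℝ (deriv p_f) s)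
    (hunit : ∀ s : ℝ, ‖deriv p_f s‖ = 1)
    (hk : ∀ᶠ s in nhds s₀, curv p_f s ≠ 0)
    (hn : DifferentiableAt ℝ (nor p_f) s₀) :
    deriv (nor p_f) s₀ =
      (-(curv p_f s₀)) • tang p_f s₀ + tors p_f s₀ • binor p_f s₀ := by
  -- Notation
  set T := deriv p_f s₀ with hT
  set N := nor p_f s₀ with hN
  set v := deriv (nor p_f) s₀ with hv
  have hdt : DifferentiableAt ℝ (deriv p_f) s₀ := hd2.self_of_nhds
  have hk0 : curv p_f s₀ ≠ 0 := hk.self_of_nhds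
  -- ⟪t, t'⟫ = 0 eventually
  have korth : ∀ᶠ s in nhds s₀, ⟪deriv p_f s, deriv (deriv p_f) s⟫ = 0 := by
    filter_upwards [hd2] with s hs
    have h1 : HasDerivAt (fun t => ⟪deriv p_f t, deriv p_f t⟫)
        (⟪deriv p_f s, deriv (deriv p_f) s⟫ + ⟪deriv (deriv p_f) s, deriv p_f s⟫) s :=
      (hs.hasDerivAt).inner ℝ (hs.hasDerivAt)
    have h2 : (fun t => ⟪deriv p_f t, deriv p_f t⟫) = fun _ => (1:ℝ) := by
      funext t
      rw [real_inner_self_eq_norm_sq, hunit]; norm_num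
    rw [h2] at h1
    have := h1.deriv
    rw [deriv_const] at this
    rw [real_inner_comm (deriv (deriv p_f) s)] at this
    rw [real_inner_comm]; linarith
  -- ⟪t, n⟫ = 0 eventually
  have tn0 : ∀ᶠ s in nhds s₀, ⟪deriv p_f s, nor p_f s⟫ = 0 := by
    filter_upwards [korth] with s hs
    show ⟪deriv p_f s, (curv p_f s)⁻¹ • deriv (deriv p_f) s⟫ = 0
    rw [real_inner_smul_right, hs, mul_zero]
  -- ⟪n, n⟫ = 1 eventually
  have nn1 : ∀ᶠ s in nhds s₀, ⟪nor p_f s, nor p_f s⟫ = 1 := by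
    filter_upwards [hk] with s hs
    have : ⟪nor p_f s, nor p_f s⟫
        = (curv p_f s)⁻¹ * ((curv p_f s)⁻¹ * ⟪deriv (deriv p_f) s, deriv (deriv p_f) s⟫) := by
      show ⟪(curv p_f s)⁻¹ • deriv (deriv p_f) s, (curv p_f s)⁻¹ • deriv (deriv p_f) s⟫ = _
      rw [real_inner_smul_left, real_inner_smul_right]
    rw [this, real_inner_self_eq_norm_sq]
    have hc : ‖deriv (deriv p_f) s‖ = curv p_f s := rfl
    rw [hc]
    field_simp
  -- ⟪N, v⟫ = 0
  have hNv : ⟪N, v⟫ = 0 := by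
    have h1 : HasDerivAt (fun t => ⟪nor p_f t, nor p_f t⟫) (⟪N, v⟫ + ⟪v, N⟫) s₀ :=
      (hn.hasDerivAt).inner ℝ (hn.hasDerivAt)
    have h2 : deriv (fun t => ⟪nor p_f t, nor p_f t⟫) s₀ = deriv (fun _ => (1:ℝ)) s₀ :=
      Filter.EventuallyEq.deriv_eq nn1
    rw [h1.deriv, deriv_const] at h2
    have hc := real_inner_comm N v
    linarith
  -- ⟪T, v⟫ = -curv
  have hTv : ⟪T, v⟫ = -(curv p_f s₀) := by
    have h1 : HasDerivAt (fun t => ⟪deriv p_f t, nor p_f t⟫)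
        (⟪T, v⟫ + ⟪deriv (deriv p_f) s₀, N⟫) s₀ :=
      (hdt.hasDerivAt).inner ℝ (hn.hasDerivAt)
    have h2 : deriv (fun t => ⟪deriv p_f t, nor p_f t⟫) s₀ = deriv (fun _ => (0:ℝ)) s₀ :=
      Filter.EventuallyEq.deriv_eq tn0
    rw [h1.deriv, deriv_const] at h2
    have h3 : ⟪deriv (deriv p_f) s₀, N⟫ = curv p_f s₀ := by
      rw [hN]
      have : ⟪deriv (deriv p_f) s₀, nor p_f s₀⟫
          = (curv p_f s₀)⁻¹ * ⟪deriv (deriv p_f) s₀, deriv (deriv p_f) s₀⟫ := by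
        show ⟪deriv (deriv p_f) s₀, (curv p_f s₀)⁻¹ • deriv (deriv p_f) s₀⟫ = _
        rw [real_inner_smul_right]
      rw [this, real_inner_self_eq_norm_sq]
      have hc : ‖deriv (deriv p_f) s₀‖ = curv p_f s₀ := rfl
      rw [hc]
      field_simp
    rw [h3] at h2
    linarith
  -- orthonormality at s₀
  have h1 : ⟪T, T⟫ = 1 := by
    rw [real_inner_self_eq_norm_sq, hT, hunit]; norm_num
  have h2 : ⟪N, N⟫ = 1 := nn1.self_of_nhds
  have h3 : ⟪T, N⟫ = 0 := tn0.self_of_nhds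
  have key := decomp T N v h1 h2 h3
  rw [hTv, hNv] at key
  have hb : binor p_f s₀ = cross3 T N := rfl
  have ht : tors p_f s₀ = ⟪cross3 T N, v⟫ := by rw [tors, hb, hv]
  rw [key]
  rw [tang, ← hT, hb, ht]
  simp
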